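/- Let d ∈ ℕ, 0 < θ ≤ 2 ≤ p < ∞ and r ≥ 0. Then for every f ∈ S^{r+1/θ−1/2}_{p,θ}B one has ‖f‖_{S^r_θ A} ≤ ‖f‖_{S^{r+1/θ−1/2}_{p,θ}B}, and equality holds for the constant function f ≡ 1; in particular the embedding S^{r+1/θ−1/2}_{p,θ}B ↪ S^r_θ A has norm exactly 1. -/

import Mathlib

open MeasureTheory Real ENNReal

noncomputable section

namespace Paper

/-- The fundamental domain `[0,1)^d` of the `d`-dimensional torus `𝕋^d`. -/
def cube (d : ℕ) : Set (Fin d → ℝ) := Set.univ.pi fun _ => Set.Ico (0:ℝ) 1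

/-- The trigonometric character `x ↦ e^{2π i k·x}`. -/
def expk (d : ℕ) (k : Fin d → ℤ) (x : Fin d → ℝ) : ℂ :=
  Complex.exp (((2 * Real.pi * ∑ i, (k i : ℝ) * x i : ℝ) : ℂ) * Complex.I)

/-- Fourier coefficient `f̂(k) = ∫_{[0,1)^d} f(x) e^{-2π i k·x} dx`. -/
def fCoeff (d : ℕ) (f : (Fin d → ℝ) → ℂ) (k : Fin d → ℤ) : ℂ :=
  ∫ x in cube d, f x * expk d (-k) x

/-- The `L_q` (quasi-)norm on the torus, `q ∈ (0,∞]`, valued in `ℝ≥0∞`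
(for `q = ∞` this is the essential supremum). -/
def LqNorm (d : ℕ) (q : ℝ≥0∞) (f : (Fin d → ℝ) → ℂ) : ℝ≥0∞ :=
  eLpNorm f q (volume.restrict (cube d))

/-- The weight `∏_{i=1}^d (1+|k_i|)`. -/
def wt (d : ℕ) (k : Fin d → ℤ) : ℝ := ∏ i, (1 + |(k i : ℝ)|)

/-- The weighted Wiener (quasi-)norm `‖f‖_{S^r_θ A}`
(with the sup modification for `θ = ∞`); `A_θ` corresponds to `r = 0`,
the Wiener algebra `A` to `r = 0`, `θ = 1`. -/
def wienerNorm (d : ℕ) (r : ℝ) (θ : ℝ≥0∞) (f : (Fin d → ℝ) → ℂ) : ℝ≥0∞ :=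
  if θ = ∞ then ⨆ k : Fin d → ℤ, ENNReal.ofReal (wt d k ^ r) * (‖fCoeff d f k‖₊ : ℝ≥0∞)
  else (∑' k : Fin d → ℤ,
      (ENNReal.ofReal (wt d k ^ r) * (‖fCoeff d f k‖₊ : ℝ≥0∞)) ^ θ.toReal) ^ (1 / θ.toReal)

/-- Trigonometric polynomials with at most `m` terms. -/
def trigPoly (d m : ℕ) : Set ((Fin d → ℝ) → ℂ) :=
  {s | ∃ (Λ : Finset (Fin d → ℤ)) (a : (Fin d → ℤ) → ℂ),
    Λ.card ≤ m ∧ s = fun x => ∑ k ∈ Λ, a k * expk d k x}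

/-- Best `m`-term trigonometric approximation error of `f`, error measured by `X`. -/
def sigmaF (d m : ℕ) (X : ((Fin d → ℝ) → ℂ) → ℝ≥0∞) (f : (Fin d → ℝ) → ℂ) : ℝ≥0∞ :=
  ⨅ s ∈ trigPoly d m, X (f - s)

/-- The unit ball of the space (inside `L₁(𝕋^d)`) with (quasi-)norm `N`. -/
def unitBall (d : ℕ) (N : ((Fin d → ℝ) → ℂ) → ℝ≥0∞) : Set ((Fin d → ℝ) → ℂ) :=
  {f | IntegrableOn f (cube d) ∧ N f ≤ 1}

/-- Best `m`-term trigonometric width of the unit ball of `N`, error measured by `X`. -/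
def sigmaClass (d m : ℕ) (N X : ((Fin d → ℝ) → ℂ) → ℝ≥0∞) : ℝ≥0∞ :=
  ⨆ f ∈ unitBall d N, sigmaF d m X f

/-- `log*(m) = max (log₂ m) 1`. -/
def logStar (m : ℕ) : ℝ := max (Real.logb 2 m) 1

/-- Two-sided asymptotic equivalence `a_m ≍ b_m`. -/
def IsAsympEquiv (a : ℕ → ℝ≥0∞) (b : ℕ → ℝ) : Prop :=
  ∃ c C : ℝ, 0 < c ∧ 0 < C ∧ ∃ m₀ : ℕ, ∀ m : ℕ, m₀ ≤ m →
    ENNReal.ofReal (c * b m) ≤ a m ∧ a m ≤ ENNReal.ofReal (C * b m)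

/-- One-sided asymptotic bound `a_m ≲ b_m`. -/
def IsAsympLe (a : ℕ → ℝ≥0∞) (b : ℕ → ℝ) : Prop :=
  ∃ C : ℝ, 0 < C ∧ ∃ m₀ : ℕ, ∀ m : ℕ, m₀ ≤ m → a m ≤ ENNReal.ofReal (C * b m)

/-- Dyadic block `I_0 = {0}`, `I_n = {k : 2^{n-1} ≤ |k| < 2^n}` for `n ≥ 1`. -/
def blockF (n : ℕ) : Finset ℤ :=
  (Finset.Icc (-(2^n : ℤ)) (2^n)).filter fun k =>
    (n = 0 ∧ k = 0) ∨ (n ≠ 0 ∧ 2^(n-1) ≤ |k| ∧ |k| < 2^n)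

/-- The dyadic block projection `∑_{k ∈ I_j} f̂(k) e^{2π i k·x}`. -/
def blockProj (d : ℕ) (f : (Fin d → ℝ) → ℂ) (j : Fin d → ℕ) : (Fin d → ℝ) → ℂ :=
  fun x => ∑ k ∈ Fintype.piFinset (fun i => blockF (j i)), fCoeff d f k * expk d k x

/-- The mixed-smoothness Besov (quasi-)norm `‖f‖_{S^s_{p,θ}B}`
(with the sup modification for `θ = ∞`). -/
def besovNorm (d : ℕ) (s : ℝ) (p θ : ℝ≥0∞) (f : (Fin d → ℝ) → ℂ) : ℝ≥0∞ :=
  if θ = ∞ then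
    ⨆ j : Fin d → ℕ,
      ENNReal.ofReal ((2:ℝ) ^ (((∑ i, j i : ℕ) : ℝ) * s)) * LqNorm d p (blockProj d f j)
  else
    (∑' j : Fin d → ℕ,
      (ENNReal.ofReal ((2:ℝ) ^ (((∑ i, j i : ℕ) : ℝ) * s)) * LqNorm d p (blockProj d f j))
        ^ θ.toReal) ^ (1 / θ.toReal)

/-- The mixed-smoothness Sobolev norm `‖f‖_{S^s_p W}` (Littlewood–Paley form),
with `S^0_p W := L_p`. -/
def sobolevNorm (d : ℕ) (s : ℝ) (p : ℝ≥0∞) (f : (Fin d → ℝ) → ℂ) : ℝ≥0∞ :=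
  if s = 0 then LqNorm d p f
  else
    (∫⁻ x in cube d,
      ((∑' j : Fin d → ℕ,
        (ENNReal.ofReal ((2:ℝ) ^ (((∑ i, j i : ℕ) : ℝ) * s)) *
          (‖blockProj d f j x‖₊ : ℝ≥0∞)) ^ (2:ℕ)) ^ ((1:ℝ)/2)) ^ p.toReal) ^ (1 / p.toReal)

/-- Trigonometric polynomials with frequencies in `[-M,M]^d`. -/
def boxPoly (d M : ℕ) : Set ((Fin d → ℝ) → ℂ) :=
  {s | ∃ (Λ : Finset (Fin d → ℤ)) (a : (Fin d → ℤ) → ℂ),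
    (∀ k ∈ Λ, ∀ i, |k i| ≤ (M : ℤ)) ∧ s = fun x => ∑ k ∈ Λ, a k * expk d k x}

/-- Error of best approximation by trigonometric polynomials with
frequencies in `[-M,M]^d`, measured in `L_∞`. -/
def EBox (d M : ℕ) (f : (Fin d → ℝ) → ℂ) : ℝ≥0∞ :=
  ⨅ g ∈ boxPoly d M, LqNorm d ∞ (f - g)

/-- The `m`-th (non-linear) sampling width of the class of continuous functions
in the unit ball of `N`, error measured in `L_q`. -/
def samplingWidth (d m : ℕ) (N : ((Fin d → ℝ) → ℂ) → ℝ≥0∞) (q : ℝ≥0∞) : ℝ≥0∞ :=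
  ⨅ (t : Fin m → (Fin d → ℝ)) (_ : ∀ i, t i ∈ cube d)
    (R : (Fin m → ℂ) → ((Fin d → ℝ) → ℂ)),
    ⨆ f ∈ {f : (Fin d → ℝ) → ℂ | Continuous f ∧ N f ≤ 1},
      LqNorm d q (f - R fun i => f (t i))


lemma measurableSet_cube (d : ℕ) : MeasurableSet (cube d) :=
  MeasurableSet.univ_pi fun _ => measurableSet_Ico

lemma volume_cube (d : ℕ) : volume (cube d) = 1 := by
  rw [cube, volume_pi_pi]
  simp

instance cubeProb (d : ℕ) : IsProbabilityMeasure (volume.restrict (cube d)) :=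
  ⟨by rw [Measure.restrict_apply_univ, volume_cube]⟩

lemma expk_eq_prod (d : ℕ) (k : Fin d → ℤ) (x : Fin d → ℝ) :
    expk d k x = ∏ i, Complex.exp (((2 * Real.pi * (k i : ℝ) * x i : ℝ) : ℂ) * Complex.I) := by
  rw [expk, ← Complex.exp_sum]
  congr 1
  rw [← Finset.sum_mul]
  congr 1
  push_cast
  rw [Finset.mul_sum]
  exact Finset.sum_congr rfl fun i _ => by ring

lemma integral_exp_Ico (m : ℤ) :
    ∫ t in Set.Ico (0:ℝ) 1, Complex.exp (((2 * Real.pi * (m : ℝ) * t : ℝ) : ℂ) * Complex.I)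
      = if m = 0 then 1 else 0 := by
  rcases eq_or_ne m 0 with hm | hm
  · simp [hm]
  · rw [if_neg hm]
    have hc : (2 * Real.pi * (m:ℝ) : ℂ) * Complex.I ≠ 0 := by
      simp [Complex.ext_iff, Real.pi_ne_zero, hm, Complex.I_ne_zero, mul_ne_zero]
    have : ∀ t : ℝ, (((2 * Real.pi * (m : ℝ) * t : ℝ) : ℂ) * Complex.I)
        = ((2 * Real.pi * (m:ℝ) : ℂ) * Complex.I) * (t : ℂ) := by
      intro t; push_cast; ring
    simp_rw [this]
    rw [setIntegral_congr_set Ico_ae_eq_Ioc, ← intervalIntegral.integral_of_le zero_le_one,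
      integral_exp_mul_complex hc]
    have h1 : ((2 * Real.pi * (m:ℝ) : ℂ) * Complex.I) * (1:ℝ) = (m : ℂ) * (2 * Real.pi * Complex.I) := by
      push_cast; ring
    have h0 : ((2 * Real.pi * (m:ℝ) : ℂ) * Complex.I) * ((0:ℝ):ℂ) = 0 := by
      push_cast; ring
    rw [h1, h0, Complex.exp_int_mul_two_pi_mul_I, Complex.exp_zero, sub_self, zero_div]

lemma indicator_pi_prod {d : ℕ} (g : Fin d → ℝ → ℂ) (x : Fin d → ℝ) :
    (cube d).indicator (fun x => ∏ i, g i (x i)) x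
      = ∏ i, (Set.Ico (0:ℝ) 1).indicator (g i) (x i) := by
  by_cases hx : x ∈ cube d
  · rw [Set.indicator_of_mem hx]
    refine Finset.prod_congr rfl fun i _ => ?_
    rw [Set.indicator_of_mem (hx i (Set.mem_univ i))]
  · rw [Set.indicator_of_notMem hx]
    rw [cube, Set.mem_univ_pi] at hx
    push_neg at hx
    obtain ⟨i, hi⟩ := hx
    exact (Finset.prod_eq_zero (Finset.mem_univ i) (Set.indicator_of_notMem hi _)).symm

lemma integral_expk (d : ℕ) (m : Fin d → ℤ) :
    ∫ x in cube d, expk d m x = if m = 0 then 1 else 0 := by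
  simp_rw [expk_eq_prod]
  rw [← integral_indicator (measurableSet_cube d)]
  simp_rw [indicator_pi_prod (fun i t => Complex.exp (((2 * Real.pi * (m i : ℝ) * t : ℝ) : ℂ) * Complex.I))]
  rw [volume_pi, MeasureTheory.integral_fintype_prod_eq_prod
    (f := fun i => (Set.Ico (0:ℝ) 1).indicator
      (fun t => Complex.exp (((2 * Real.pi * (m i : ℝ) * t : ℝ) : ℂ) * Complex.I)))]
  have : ∀ i, (∫ t : ℝ, (Set.Ico (0:ℝ) 1).indicator
      (fun t => Complex.exp (((2 * Real.pi * (m i : ℝ) * t : ℝ) : ℂ) * Complex.I)) t)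
      = if m i = 0 then 1 else 0 := fun i => by
    rw [integral_indicator measurableSet_Ico, integral_exp_Ico]
  simp_rw [this]
  by_cases hm : m = 0
  · simp [hm]
  · rw [if_neg hm]
    obtain ⟨i, hi⟩ := Function.ne_iff.mp hm
    exact Finset.prod_eq_zero (Finset.mem_univ i) (if_neg hi)

lemma expk_add (d : ℕ) (k l : Fin d → ℤ) (x : Fin d → ℝ) :
    expk d (k + l) x = expk d k x * expk d l x := by
  have h : ∑ i, ((k + l) i : ℝ) * x i = (∑ i, (k i : ℝ) * x i) + ∑ i, (l i : ℝ) * x i := by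
    rw [← Finset.sum_add_distrib]
    exact Finset.sum_congr rfl fun i _ => by push_cast [Pi.add_apply]; ring
  rw [expk, expk, expk, h, ← Complex.exp_add]
  congr 1
  push_cast
  ring

lemma expk_zero (d : ℕ) (x : Fin d → ℝ) : expk d 0 x = 1 := by
  simp [expk]

lemma conj_expk (d : ℕ) (k : Fin d → ℤ) (x : Fin d → ℝ) :
    (starRingEnd ℂ) (expk d k x) = expk d (-k) x := by
  have h : ∑ i, ((-k) i : ℝ) * x i = -∑ i, (k i : ℝ) * x i := by
    rw [← Finset.sum_neg_distrib]
    exact Finset.sum_congr rfl fun i _ => by push_cast [Pi.neg_apply]; ring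
  rw [expk, expk, ← Complex.exp_conj, h]
  congr 1
  rw [map_mul, Complex.conj_I, Complex.conj_ofReal]
  push_cast
  ring

lemma continuous_expk (d : ℕ) (k : Fin d → ℤ) : Continuous (expk d k) := by
  apply Complex.continuous_exp.comp
  apply Continuous.mul _ continuous_const
  apply Complex.continuous_ofReal.comp
  exact (continuous_const.mul (continuous_finset_sum _ fun i _ =>
    (continuous_const.mul (continuous_apply i))))

lemma norm_expk (d : ℕ) (k : Fin d → ℤ) (x : Fin d → ℝ) : ‖expk d k x‖ = 1 := by
  rw [expk, Complex.norm_exp]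
  simp

lemma integrableOn_expk (d : ℕ) (k : Fin d → ℤ) : IntegrableOn (expk d k) (cube d) := by
  refine Integrable.mono' (integrable_const 1) ((continuous_expk d k).aestronglyMeasurable) ?_
  filter_upwards with x
  rw [norm_expk]

lemma integral_mul_conj_poly (d : ℕ) (Λ : Finset (Fin d → ℤ)) (a : (Fin d → ℤ) → ℂ) :
    ∫ x in cube d, (∑ k ∈ Λ, a k * expk d k x) * (starRingEnd ℂ) (∑ k ∈ Λ, a k * expk d k x)
      = ∑ k ∈ Λ, (Complex.normSq (a k) : ℂ) := by
  have key : ∀ x, (∑ k ∈ Λ, a k * expk d k x) * (starRingEnd ℂ) (∑ k ∈ Λ, a k * expk d k x)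
      = ∑ k ∈ Λ, ∑ l ∈ Λ, (a k * (starRingEnd ℂ) (a l)) * expk d (k + -l) x := by
    intro x
    rw [map_sum, Finset.sum_mul_sum]
    refine Finset.sum_congr rfl fun k _ => Finset.sum_congr rfl fun l _ => ?_
    rw [map_mul, conj_expk, expk_add]
    ring
  simp_rw [key]
  rw [integral_finset_sum _ fun k _ => integrable_finset_sum _ fun l _ =>
    ((integrableOn_expk d (k + -l)).const_mul _)]
  have inner : ∀ k ∈ Λ, (∫ x in cube d, ∑ l ∈ Λ, (a k * (starRingEnd ℂ) (a l)) * expk d (k + -l) x)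
      = (Complex.normSq (a k) : ℂ) := by
    intro k hk
    rw [integral_finset_sum _ fun l _ => ((integrableOn_expk d (k + -l)).const_mul _)]
    have h2 : ∀ l ∈ Λ, (∫ x in cube d, (a k * (starRingEnd ℂ) (a l)) * expk d (k + -l) x)
        = if l = k then (Complex.normSq (a k) : ℂ) else 0 := by
      intro l _
      rw [MeasureTheory.integral_const_mul, integral_expk]
      by_cases h : l = k
      · subst h; simp [Complex.mul_conj]
      · rw [if_neg, mul_zero, if_neg h]
        intro hc
        apply h
        funext i
        have := congrFun hc i
        simp only [Pi.add_apply, Pi.neg_apply, Pi.zero_apply] at this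
        omega
    rw [Finset.sum_congr rfl h2, Finset.sum_ite_eq' Λ k]
    simp [hk]
  rw [Finset.sum_congr rfl inner]

lemma eLpNorm_two_poly (d : ℕ) (Λ : Finset (Fin d → ℤ)) (a : (Fin d → ℤ) → ℂ) :
    eLpNorm (fun x => ∑ k ∈ Λ, a k * expk d k x) 2 (volume.restrict (cube d))
      = (∑ k ∈ Λ, ((‖a k‖₊ : ℝ≥0∞)) ^ (2:ℝ)) ^ ((1:ℝ)/2) := by
  set g : (Fin d → ℝ) → ℂ := fun x => ∑ k ∈ Λ, a k * expk d k x with hg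
  have hgc : Continuous g := continuous_finset_sum _ fun k _ =>
    continuous_const.mul (continuous_expk d k)
  have hInt : Integrable (fun x => g x * (starRingEnd ℂ) (g x)) (volume.restrict (cube d)) := by
    have : ∀ x, g x * (starRingEnd ℂ) (g x)
        = ∑ k ∈ Λ, ∑ l ∈ Λ, (a k * (starRingEnd ℂ) (a l)) * expk d (k + -l) x := by
      intro x
      rw [hg, map_sum, Finset.sum_mul_sum]
      refine Finset.sum_congr rfl fun k _ => Finset.sum_congr rfl fun l _ => ?_
      rw [map_mul, conj_expk, expk_add]; ring
    simp_rw [this]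
    exact integrable_finset_sum _ fun k _ => integrable_finset_sum _ fun l _ =>
      ((integrableOn_expk d (k + -l)).const_mul _)
  have hsq : ∀ x, ‖g x‖ ^ (2:ℝ) = (g x * (starRingEnd ℂ) (g x)).re := by
    intro x
    rw [Real.rpow_two, Complex.mul_conj, Complex.ofReal_re, ← Complex.sq_norm]
  have hint2 : Integrable (fun x => ‖g x‖ ^ (2:ℝ)) (volume.restrict (cube d)) := by
    simp_rw [hsq]
    exact hInt.re
  rw [eLpNorm_eq_lintegral_rpow_enorm_toReal (by norm_num) (by norm_num)]
  simp only [enorm_eq_nnnorm]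
  have htoReal : (2:ℝ≥0∞).toReal = (2:ℝ) := by norm_num
  rw [htoReal]
  have hlint : (∫⁻ x, (‖g x‖₊ : ℝ≥0∞) ^ (2:ℝ) ∂(volume.restrict (cube d)))
      = ENNReal.ofReal (∫ x, ‖g x‖ ^ (2:ℝ) ∂(volume.restrict (cube d))) := by
    rw [MeasureTheory.ofReal_integral_eq_lintegral_ofReal hint2
      (Filter.Eventually.of_forall fun x => by positivity)]
    congr 1
    funext x
    rw [← enorm_eq_nnnorm, ← ofReal_norm, ENNReal.ofReal_rpow_of_nonneg (norm_nonneg _) (by norm_num)]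
  rw [hlint]
  have : (∫ x, ‖g x‖ ^ (2:ℝ) ∂(volume.restrict (cube d))) = ∑ k ∈ Λ, ‖a k‖ ^ 2 := by
    simp_rw [hsq]
    simp_rw [← RCLike.re_eq_complex_re]
    rw [integral_re hInt]
    simp_rw [RCLike.re_eq_complex_re]
    rw [integral_mul_conj_poly d Λ a, Complex.re_sum]
    refine Finset.sum_congr rfl fun k _ => ?_
    simp [Complex.normSq_eq_norm_sq, ← Complex.ofReal_pow]
  rw [this]
  congr 1
  rw [ENNReal.ofReal_sum_of_nonneg (fun k _ => by positivity)]
  refine Finset.sum_congr rfl fun k _ => ?_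
  rw [← Real.rpow_two, ← ENNReal.ofReal_rpow_of_nonneg (norm_nonneg _) (by norm_num),
    ofReal_norm, enorm_eq_nnnorm]

def nu (k : ℤ) : ℕ := if k = 0 then 0 else Nat.log 2 k.natAbs + 1

lemma nu_spec {k : ℤ} (hk : k ≠ 0) : 2 ^ (nu k - 1) ≤ |k| ∧ |k| < 2 ^ (nu k) := by
  have hna : k.natAbs ≠ 0 := Int.natAbs_ne_zero.mpr hk
  have h1 : 2 ^ Nat.log 2 k.natAbs ≤ k.natAbs := Nat.pow_log_le_self 2 hna
  have h2 : k.natAbs < 2 ^ (Nat.log 2 k.natAbs + 1) := Nat.lt_pow_succ_log_self (by norm_num) _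
  rw [nu, if_neg hk, Nat.add_sub_cancel, Int.abs_eq_natAbs]
  exact ⟨by exact_mod_cast h1, by exact_mod_cast h2⟩

lemma nu_ne_zero {k : ℤ} (hk : k ≠ 0) : nu k ≠ 0 := by rw [nu, if_neg hk]; omega

lemma mem_blockF_iff {n : ℕ} {k : ℤ} : k ∈ blockF n ↔ nu k = n := by
  rw [blockF, Finset.mem_filter, Finset.mem_Icc]
  constructor
  · rintro ⟨-, (⟨h0, hk⟩ | ⟨hn, h1, h2⟩)⟩
    · simp [nu, hk, h0]
    · have hk : k ≠ 0 := by
        intro h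
        rw [h, abs_zero] at h1
        have := pow_pos (by norm_num : (0:ℤ) < 2) (n-1)
        linarith
      obtain ⟨g1, g2⟩ := nu_spec hk
      have hnu : nu k ≠ 0 := nu_ne_zero hk
      by_contra hne
      rcases lt_or_gt_of_ne hne with h | h
      · have : (2:ℤ) ^ nu k ≤ 2 ^ (n-1) := pow_le_pow_right₀ (by norm_num) (by omega)
        linarith
      · have : (2:ℤ) ^ n ≤ 2 ^ (nu k - 1) := pow_le_pow_right₀ (by norm_num) (by omega)
        linarith
  · intro h
    subst h
    rcases eq_or_ne k 0 with hk | hk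
    · subst hk
      have h2 : (0:ℤ) ≤ 2 ^ nu 0 := by positivity
      exact ⟨⟨by linarith, h2⟩, Or.inl ⟨by simp [nu], rfl⟩⟩
    · obtain ⟨g1, g2⟩ := nu_spec hk
      refine ⟨⟨?_, ?_⟩, Or.inr ⟨nu_ne_zero hk, g1, g2⟩⟩
      · linarith [(abs_lt.mp g2).1]
      · exact le_trans (le_abs_self k) g2.le

lemma card_blockF_le (n : ℕ) : (blockF n).card ≤ 2 ^ n := by
  rcases Nat.eq_zero_or_pos n with hn | hn
  · subst hn
    have hsub : blockF 0 ⊆ {0} := by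
      intro k hk
      rw [mem_blockF_iff] at hk
      simp only [Finset.mem_singleton]
      by_contra h
      exact (nu_ne_zero h) hk
    simpa using (Finset.card_le_card hsub)
  · have hpow : (2:ℤ)^(n-1) ≤ 2^n := pow_le_pow_right₀ (by norm_num) (Nat.sub_le n 1)
    have hsub : blockF n ⊆ Finset.Ioo (-(2^n : ℤ)) (2^n) \ Finset.Ioo (-(2^(n-1) : ℤ)) (2^(n-1)) := by
      intro k hk
      rw [mem_blockF_iff] at hk
      have hk0 : k ≠ 0 := by
        intro h; subst h; simp [nu] at hk; omega
      obtain ⟨g1, g2⟩ := nu_spec hk0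
      rw [hk] at g1 g2
      rw [Finset.mem_sdiff, Finset.mem_Ioo, Finset.mem_Ioo]
      refine ⟨abs_lt.mp g2, fun hmem => ?_⟩
      have : |k| < 2^(n-1) := abs_lt.mpr hmem
      linarith
    have hBA : Finset.Ioo (-(2^(n-1):ℤ)) (2^(n-1)) ⊆ Finset.Ioo (-(2^n : ℤ)) (2^n) := by
      intro x hx
      rw [Finset.mem_Ioo] at hx ⊢
      constructor <;> linarith [hx.1, hx.2]
    calc (blockF n).card ≤ _ := Finset.card_le_card hsub
      _ = _ := Finset.card_sdiff_of_subset hBA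
      _ ≤ 2^n := by
          rw [Int.card_Ioo, Int.card_Ioo]
          have hbz : ((2:ℕ)^(n-1) : ℤ) = (2:ℤ)^(n-1) := by push_cast; ring
          have h2nZ : (2:ℤ)^n = 2 * 2^(n-1) := by
            conv_lhs => rw [show n = (n-1)+1 by omega]
            ring
          have hn2 : (2:ℕ)^n = 2 * 2^(n-1) := by
            conv_lhs => rw [show n = (n-1)+1 by omega]
            ring
          rw [h2nZ, hn2, ← hbz]
          omega

lemma one_add_abs_le_of_mem {n : ℕ} {k : ℤ} (h : k ∈ blockF n) : 1 + |(k:ℝ)| ≤ 2^n := by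
  rw [mem_blockF_iff] at h
  rcases eq_or_ne k 0 with hk | hk
  · subst hk
    simp [nu] at h
    subst h
    simp
  · have g2 := (nu_spec hk).2
    rw [h] at g2
    have h2 : |k| + 1 ≤ 2^n := Int.add_one_le_iff.mpr g2
    have : ((|k| + 1 : ℤ) : ℝ) ≤ ((2^n : ℤ) : ℝ) := by exact_mod_cast h2
    push_cast at this
    rw [← Int.cast_abs]
    push_cast
    linarith

lemma sum_rpow_le {ι : Type*} (s : Finset ι) (c : ι → ℝ≥0∞) {t : ℝ} (ht : 0 < t) (ht2 : t ≤ 2) :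
    ∑ k ∈ s, c k ^ t ≤ (s.card : ℝ≥0∞) ^ (1 - t/2) * (∑ k ∈ s, c k ^ (2:ℝ)) ^ (t/2) := by
  rcases eq_or_lt_of_le ht2 with h | h
  · subst h
    norm_num
  · have hp : (1:ℝ) < 2 / t := by
      rw [lt_div_iff₀ ht]; linarith
    have hconj : (2/t : ℝ).HolderConjugate (2/t / (2/t - 1)) := Real.HolderConjugate.conjExponent hp
    have e1 : ∀ k : ι, (c k ^ t) ^ (2/t : ℝ) = c k ^ (2:ℝ) := fun k => by
      rw [← ENNReal.rpow_mul]
      congr 1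
      field_simp
    have e2 : (1:ℝ)/(2/t) = t/2 := one_div_div 2 t
    have e3 : (1:ℝ)/(2/t/(2/t-1)) = 1 - t/2 := by
      rw [one_div_div, div_div_eq_mul_div, sub_mul, div_mul_eq_mul_div, mul_div_assoc]
      field_simp
    have e4 : (∑ k ∈ s, (1:ℝ≥0∞) ^ (2/t/(2/t-1))) = (s.card : ℝ≥0∞) := by simp
    calc ∑ k ∈ s, c k ^ t = ∑ k ∈ s, c k ^ t * 1 := by simp
      _ ≤ (∑ k ∈ s, (c k ^ t) ^ (2/t : ℝ)) ^ ((1:ℝ)/(2/t)) *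
          (∑ k ∈ s, (1:ℝ≥0∞) ^ (2/t/(2/t-1))) ^ ((1:ℝ)/(2/t/(2/t-1))) :=
          ENNReal.inner_le_Lp_mul_Lq s _ _ hconj
      _ = (s.card : ℝ≥0∞) ^ (1 - t/2) * (∑ k ∈ s, c k ^ (2:ℝ)) ^ (t/2) := by
          simp_rw [e1]
          rw [e2, e3, e4, mul_comm]

lemma block_est (d : ℕ) (p : ℝ≥0∞) (hp2 : 2 ≤ p) (r : ℝ) (hr : 0 ≤ r) {t : ℝ}
    (ht : 0 < t) (ht2 : t ≤ 2) (f : (Fin d → ℝ) → ℂ) (j : Fin d → ℕ) :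
    ∑ k ∈ Fintype.piFinset (fun i => blockF (j i)),
        (ENNReal.ofReal (wt d k ^ r) * (‖fCoeff d f k‖₊ : ℝ≥0∞)) ^ t
      ≤ (ENNReal.ofReal ((2:ℝ) ^ (((∑ i, j i : ℕ) : ℝ) * (r + 1/t - 1/2)))
          * LqNorm d p (blockProj d f j)) ^ t := by
  classical
  set Λ := Fintype.piFinset (fun i => blockF (j i)) with hΛ
  set Sj : ℝ := ((∑ i, j i : ℕ) : ℝ) with hSj
  set c : (Fin d → ℤ) → ℝ≥0∞ := fun k => (‖fCoeff d f k‖₊ : ℝ≥0∞) with hc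
  set L : ℝ≥0∞ := LqNorm d p (blockProj d f j) with hL
  have h2Sj : (0:ℝ) < (2:ℝ) ^ Sj := Real.rpow_pos_of_pos (by norm_num) _
  -- weight bound
  have hwt : ∀ k ∈ Λ, ENNReal.ofReal (wt d k ^ r) ≤ ENNReal.ofReal ((2:ℝ) ^ (Sj * r)) := by
    intro k hk
    apply ENNReal.ofReal_le_ofReal
    have hwt0 : 0 ≤ wt d k := Finset.prod_nonneg fun i _ => by positivity
    have hwle : wt d k ≤ (2:ℝ) ^ Sj := by
      have : wt d k ≤ ∏ i, (2:ℝ) ^ (j i) := by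
        apply Finset.prod_le_prod (fun i _ => by positivity)
        intro i _
        exact one_add_abs_le_of_mem (Fintype.mem_piFinset.mp hk i)
      rw [Finset.prod_pow_eq_pow_sum] at this
      rwa [hSj, Real.rpow_natCast]
    calc wt d k ^ r ≤ ((2:ℝ) ^ Sj) ^ r := Real.rpow_le_rpow hwt0 hwle hr
      _ = (2:ℝ) ^ (Sj * r) := (Real.rpow_mul (by norm_num) _ _).symm
  -- cardinality bound
  have hcard : ((Λ.card : ℝ≥0∞)) ≤ ENNReal.ofReal ((2:ℝ) ^ Sj) := by
    have h1 : Λ.card ≤ 2 ^ (∑ i, j i) := by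
      rw [hΛ, Fintype.card_piFinset]
      calc ∏ i, (blockF (j i)).card ≤ ∏ i, 2 ^ (j i) :=
            Finset.prod_le_prod (fun _ _ => Nat.zero_le _) (fun i _ => card_blockF_le (j i))
        _ = 2 ^ (∑ i, j i) := Finset.prod_pow_eq_pow_sum _ _ _
    calc ((Λ.card : ℝ≥0∞)) ≤ ((2 ^ (∑ i, j i) : ℕ) : ℝ≥0∞) := by exact_mod_cast h1
      _ = ENNReal.ofReal ((2:ℝ) ^ Sj) := by
          rw [← ENNReal.ofReal_natCast]
          congr 1
          push_cast
          rw [hSj, Real.rpow_natCast]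
  -- Parseval + embedding
  have hpar : (∑ k ∈ Λ, c k ^ (2:ℝ)) ^ ((1:ℝ)/2) ≤ L := by
    rw [← eLpNorm_two_poly d Λ (fun k => fCoeff d f k)]
    rw [hL, LqNorm]
    have : blockProj d f j = fun x => ∑ k ∈ Λ, fCoeff d f k * expk d k x := rfl
    rw [this]
    apply eLpNorm_le_eLpNorm_of_exponent_le hp2
    exact (continuous_finset_sum _ fun k _ =>
      continuous_const.mul (continuous_expk d k)).aestronglyMeasurable
  have hpar' : (∑ k ∈ Λ, c k ^ (2:ℝ)) ^ (t/2) ≤ L ^ t := by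
    have : (∑ k ∈ Λ, c k ^ (2:ℝ)) ^ (t/2) = ((∑ k ∈ Λ, c k ^ (2:ℝ)) ^ ((1:ℝ)/2)) ^ t := by
      rw [← ENNReal.rpow_mul]
      congr 1
      ring
    rw [this]
    exact ENNReal.rpow_le_rpow hpar ht.le
  calc ∑ k ∈ Λ, (ENNReal.ofReal (wt d k ^ r) * c k) ^ t
      ≤ ∑ k ∈ Λ, (ENNReal.ofReal ((2:ℝ) ^ (Sj * r)) * c k) ^ t := by
        refine Finset.sum_le_sum fun k hk => ?_
        exact ENNReal.rpow_le_rpow (mul_le_mul_left (hwt k hk) _) ht.le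
    _ = ENNReal.ofReal ((2:ℝ) ^ (Sj * r)) ^ t * ∑ k ∈ Λ, c k ^ t := by
        rw [Finset.mul_sum]
        exact Finset.sum_congr rfl fun k _ => ENNReal.mul_rpow_of_nonneg _ _ ht.le
    _ ≤ ENNReal.ofReal ((2:ℝ) ^ (Sj * r)) ^ t *
        ((Λ.card : ℝ≥0∞) ^ (1 - t/2) * (∑ k ∈ Λ, c k ^ (2:ℝ)) ^ (t/2)) :=
        mul_le_mul_right (sum_rpow_le Λ c ht ht2) _
    _ ≤ ENNReal.ofReal ((2:ℝ) ^ (Sj * r)) ^ t *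
        (ENNReal.ofReal ((2:ℝ) ^ Sj) ^ (1 - t/2) * L ^ t) := by
        apply mul_le_mul_right
        exact mul_le_mul' (ENNReal.rpow_le_rpow hcard (by linarith)) hpar'
    _ = (ENNReal.ofReal ((2:ℝ) ^ (Sj * (r + 1/t - 1/2))) * L) ^ t := by
        rw [ENNReal.mul_rpow_of_nonneg _ _ ht.le, ← mul_assoc]
        congr 1
        rw [ENNReal.ofReal_rpow_of_pos (by positivity), ENNReal.ofReal_rpow_of_pos h2Sj,
          ENNReal.ofReal_rpow_of_pos (by positivity), ← ENNReal.ofReal_mul (by positivity)]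
        congr 1
        rw [← Real.rpow_mul (by norm_num), ← Real.rpow_mul (by norm_num),
          ← Real.rpow_mul (by norm_num), ← Real.rpow_add (by norm_num)]
        congr 1
        field_simp
        ring

lemma fCoeff_one (d : ℕ) (k : Fin d → ℤ) :
    fCoeff d (fun _ => (1:ℂ)) k = if k = 0 then 1 else 0 := by
  rw [fCoeff]
  simp only [one_mul]
  rw [integral_expk]
  simp [neg_eq_zero]

/-- the embedding `S^{r+1/θ-1/2}_{p,θ}B ↪ S^r_θ A`
for `0 < θ ≤ 2 ≤ p < ∞` and `r ≥ 0` has norm exactly `1`. -/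
theorem statement7 (d : ℕ) (hd : 1 ≤ d) (θ p : ℝ≥0∞) (hθ : 0 < θ) (hθ2 : θ ≤ 2)
    (hp2 : 2 ≤ p) (hp : p ≠ ∞) (r : ℝ) (hr : 0 ≤ r) :
    (∀ f : (Fin d → ℝ) → ℂ, IntegrableOn f (cube d) →
      wienerNorm d r θ f ≤ besovNorm d (r + 1/θ.toReal - 1/2) p θ f) ∧
    wienerNorm d r θ (fun _ => (1 : ℂ)) =
      besovNorm d (r + 1/θ.toReal - 1/2) p θ (fun _ => (1 : ℂ)) := by
  have hθtop : θ ≠ ∞ := ne_top_of_le_ne_top (by norm_num) hθ2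
  set t : ℝ := θ.toReal with htdef
  have ht : 0 < t := ENNReal.toReal_pos hθ.ne' hθtop
  have ht2 : t ≤ 2 := by
    have := ENNReal.toReal_mono (by norm_num : (2:ℝ≥0∞) ≠ ∞) hθ2
    simpa using this
  have hp0 : p ≠ 0 := by
    intro h
    rw [h] at hp2
    simp at hp2
  constructor
  · intro f _
    rw [wienerNorm, besovNorm, if_neg hθtop, if_neg hθtop]
    apply ENNReal.rpow_le_rpow _ (by positivity : (0:ℝ) ≤ 1/t)
    rw [← ENNReal.tsum_fiberwise
      (fun k => (ENNReal.ofReal (wt d k ^ r) * (‖fCoeff d f k‖₊ : ℝ≥0∞)) ^ t)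
      (fun (k : Fin d → ℤ) (i : Fin d) => nu (k i))]
    apply ENNReal.tsum_le_tsum
    intro j
    have hset : (fun (k : Fin d → ℤ) (i : Fin d) => nu (k i)) ⁻¹' {j}
        = ↑(Fintype.piFinset fun i => blockF (j i)) := by
      ext k
      simp only [Set.mem_preimage, Set.mem_singleton_iff, Finset.coe_sort_coe, Finset.mem_coe,
        Fintype.mem_piFinset, mem_blockF_iff, funext_iff]
    rw [hset, Finset.tsum_subtype' (Fintype.piFinset fun i => blockF (j i))
      (fun k => (ENNReal.ofReal (wt d k ^ r) * (‖fCoeff d f k‖₊ : ℝ≥0∞)) ^ t)]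
    exact block_est d p hp2 r hr ht ht2 f j
  · have hblock0 : blockProj d (fun _ => (1:ℂ)) (fun _ => 0) = fun _ => (1:ℂ) := by
      funext x
      rw [blockProj, Finset.sum_eq_single (0 : Fin d → ℤ)]
      · rw [fCoeff_one, if_pos rfl, expk_zero, one_mul]
      · intro k _ hk
        rw [fCoeff_one, if_neg hk, zero_mul]
      · intro h
        exfalso
        apply h
        rw [Fintype.mem_piFinset]
        intro i
        rw [mem_blockF_iff]
        simp [nu]
    have hblockne : ∀ j : Fin d → ℕ, j ≠ (fun _ => 0) →
        blockProj d (fun _ => (1:ℂ)) j = fun _ => (0:ℂ) := by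
      intro j hj
      funext x
      rw [blockProj]
      apply Finset.sum_eq_zero
      intro k hk
      rw [fCoeff_one, if_neg, zero_mul]
      intro hk0
      apply hj
      funext i
      have := Fintype.mem_piFinset.mp hk i
      rw [mem_blockF_iff] at this
      rw [hk0] at this
      simpa [nu] using this.symm
    rw [wienerNorm, besovNorm, if_neg hθtop, if_neg hθtop]
    have hw : (∑' k : Fin d → ℤ,
        (ENNReal.ofReal (wt d k ^ r) * (‖fCoeff d (fun _ => (1:ℂ)) k‖₊ : ℝ≥0∞)) ^ t) = 1 := by
      rw [tsum_eq_single (0 : Fin d → ℤ)]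
      · rw [fCoeff_one, if_pos rfl]
        have hwt0 : wt d (0 : Fin d → ℤ) = 1 := by
          rw [wt]
          simp
        rw [hwt0, Real.one_rpow, ENNReal.ofReal_one]
        simp
      · intro k hk
        rw [fCoeff_one, if_neg hk]
        simp only [nnnorm_zero, ENNReal.coe_zero, mul_zero]
        exact ENNReal.zero_rpow_of_pos ht
    have hb : (∑' j : Fin d → ℕ,
        (ENNReal.ofReal ((2:ℝ) ^ (((∑ i, j i : ℕ) : ℝ) * (r + 1/t - 1/2)))
          * LqNorm d p (blockProj d (fun _ => (1:ℂ)) j)) ^ t) = 1 := by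
      rw [tsum_eq_single (fun _ => (0:ℕ))]
      · rw [hblock0]
        have hL : LqNorm d p (fun _ => (1:ℂ)) = 1 := by
          rw [LqNorm, eLpNorm_const (1:ℂ) hp0 (IsProbabilityMeasure.ne_zero _)]
          simp
        rw [hL]
        simp
      · intro j hj
        rw [hblockne j hj, LqNorm]
        have : eLpNorm (fun _ => (0:ℂ)) p (volume.restrict (cube d)) = 0 := eLpNorm_zero
        rw [this, mul_zero]
        exact ENNReal.zero_rpow_of_pos ht
    rw [hw, hb]

end Paper
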